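/- The strongly connected components of 𝔹(Γ) map surjectively onto those of Γ under ψ: if x, x' lie in the same strongly connected component of 𝔹(Γ) then ψ(x), ψ(x') lie in the same strongly connected component of Γ; and for every strongly connected component C of Γ there is a strongly connected component of 𝔹(Γ) mapping onto it. -/

import Mathlib

/-!
Common setup: multilevel discrete networks (Faure–Kaji, "A circuit-preserving
mapping from multilevel to Boolean dynamics").

A gene `i` takes levels in `{0,...,b i}`, encoded as `Fin (b i + 1)`.
The Boolean case is `b i = 1`.
-/

namespace GRN

section Generic

variable {ι : Type*} [Fintype ι] [DecidableEq ι] (b : ι → ℕ)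

/-- the state space `∏ i {0,…,b i}` -/
abbrev GState := ∀ i : ι, Fin (b i + 1)

/-- L¹ distance between states -/
def dist1 (x x' : GState b) : ℕ := ∑ i, Nat.dist (x i : ℕ) (x' i : ℕ)

/-- edge relation of the asynchronous state transition graph `Γ(f)` -/
def stgEdge (f : GState b → GState b) (x x' : GState b) : Prop :=
  ∃ j : ι, (∀ k, k ≠ j → x' k = x k) ∧
    (((x j : ℕ) < (f x j : ℕ) ∧ (x' j : ℕ) = (x j : ℕ) + 1) ∨
     ((f x j : ℕ) < (x j : ℕ) ∧ (x' j : ℕ) + 1 = (x j : ℕ)))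

/-- a grid graph: every edge joins states at distance one, and there are no
two parallel outward edges at any vertex -/
def IsGridGraph (E : GState b → GState b → Prop) : Prop :=
  (∀ x x', E x x' → dist1 b x x' = 1) ∧
  (∀ (x x' x'' : GState b) (j : ι), E x x' → E x x'' →
    (∀ k, k ≠ j → x' k = x k) → (∀ k, k ≠ j → x'' k = x k) → x' = x'')

/-- asymptotic evolution function: `f i x ∈ {0, x i, b i}` -/
def Asymptotic (f : GState b → GState b) : Prop :=
  ∀ (x : GState b) (i : ι), (f x i : ℕ) = 0 ∨ f x i = x i ∨ (f x i : ℕ) = b i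

/-- stepwise (unitary) evolution function: `|f i x - x i| ≤ 1` -/
def Stepwise (f : GState b → GState b) : Prop :=
  ∀ (x : GState b) (i : ι), (f x i : ℕ) ≤ (x i : ℕ) + 1 ∧ (x i : ℕ) ≤ (f x i : ℕ) + 1

/-- the asymptotic function `f̄` associated with `f` -/
def asym (f : GState b → GState b) : GState b → GState b := fun x i =>
  if (x i : ℕ) < (f x i : ℕ) then Fin.last (b i)
  else if (f x i : ℕ) < (x i : ℕ) then 0 else x i

/-- the stepwise function `f̂` associated with `f` -/
def stepw (f : GState b → GState b) : GState b → GState b := fun x i =>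
  if h : (x i : ℕ) < (f x i : ℕ) then ⟨(x i : ℕ) + 1, Nat.lt_of_le_of_lt h (f x i).isLt⟩
  else if (f x i : ℕ) < (x i : ℕ) then
    ⟨(x i : ℕ) - 1, lt_of_le_of_lt (Nat.sub_le _ _) (x i).isLt⟩
  else x i

/-- `x + e j` (defined when `x j < b j`) -/
def bump (x : GState b) (j : ι) (h : (x j : ℕ) < b j) : GState b :=
  Function.update x j ⟨(x j : ℕ) + 1, Nat.succ_lt_succ h⟩

/-- `x - e j` -/
def drop (x : GState b) (j : ι) : GState b :=
  Function.update x j ⟨(x j : ℕ) - 1, lt_of_le_of_lt (Nat.sub_le _ _) (x j).isLt⟩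

/-- positive edge `j → i` in the local interaction graph `Gf(x)`:
`∂⁺ⱼfᵢ(x) > 0` or `∂⁻ⱼfᵢ(x) > 0` -/
def PosEdge (f : GState b → GState b) (x : GState b) (j i : ι) : Prop :=
  (∃ h : (x j : ℕ) < b j, (f x i : ℕ) < (f (bump b x j h) i : ℕ)) ∨
  (0 < (x j : ℕ) ∧ (f (drop b x j) i : ℕ) < (f x i : ℕ))

/-- negative edge `j → i` in the local interaction graph `Gf(x)` -/
def NegEdge (f : GState b → GState b) (x : GState b) (j i : ι) : Prop :=
  (∃ h : (x j : ℕ) < b j, (f (bump b x j h) i : ℕ) < (f x i : ℕ)) ∨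
  (0 < (x j : ℕ) ∧ (f x i : ℕ) < (f (drop b x j) i : ℕ))

/-- an edge with sign `s` (`true` = negative) -/
def SignedEdge (f : GState b → GState b) (x : GState b) (s : Bool) (j i : ι) : Prop :=
  if s then NegEdge b f x j i else PosEdge b f x j i

/-- a type-1 functional circuit at `x`, negative iff `neg`: a cycle (with
pairwise-distinct vertices) in the local interaction graph `Gf(x)` whose number
of negative edges is odd iff `neg` -/
def HasType1Circuit (f : GState b → GState b) (x : GState b) (neg : Bool) : Prop :=
  ∃ (k : ℕ) (v : Fin (k + 1) → ι) (s : Fin (k + 1) → Bool),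
    Function.Injective v ∧
    (∀ t, SignedEdge b f x (s t) (v t) (v (t + 1))) ∧
    (Odd (Finset.univ.filter fun t => s t = true).card ↔ neg = true)

/-- mutual reachability -/
def InSameSCC (E : GState b → GState b → Prop) (x y : GState b) : Prop :=
  Relation.ReflTransGen E x y ∧ Relation.ReflTransGen E y x

/-- the strongly connected component of `x` -/
def sccOf (E : GState b → GState b → Prop) (x : GState b) : Set (GState b) :=
  {y | InSameSCC b E x y}

/-- attractor: terminal strongly connected set of states -/
def IsAttractor (E : GState b → GState b → Prop) (A : Set (GState b)) : Prop :=
  A.Nonempty ∧ (∀ x ∈ A, ∀ y ∈ A, Relation.ReflTransGen E x y) ∧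
  (∀ x ∈ A, ∀ y, E x y → y ∈ A)

/-- stable state: no outgoing edges -/
def IsStable (E : GState b → GState b → Prop) (x : GState b) : Prop :=
  ∀ y, ¬ E x y

end Generic

section Binarisation

variable {n : ℕ} {m : Fin n → ℕ}

/-- index set of the Boolean state space `𝔹^(m₁+⋯+mₙ)` -/
abbrev BIdx (m : Fin n → ℕ) := Σ i : Fin n, Fin (m i)

/-- all maximal levels equal to 1 -/
abbrev bOne (m : Fin n → ℕ) : BIdx m → ℕ := fun _ => 1

/-- the Boolean state space `𝔹^(m₁+⋯+mₙ)` -/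
abbrev BState (m : Fin n → ℕ) := GState (bOne m)

/-- the surjection `ψ : 𝔹^(m₁+⋯+mₙ) → M`, counting ones in each block -/
def psi (x : BState m) : GState m := fun i =>
  ⟨∑ j : Fin (m i), (x ⟨i, j⟩ : ℕ), Nat.lt_succ_of_le (by
    calc ∑ j : Fin (m i), (x ⟨i, j⟩ : ℕ) ≤ ∑ _j : Fin (m i), 1 :=
          Finset.sum_le_sum (fun j _ => Nat.lt_succ_iff.mp (x ⟨i, j⟩).isLt)
      _ = m i := by simp)⟩

/-- Van Ham's embedding `b₀ : M → 𝔹^(m₁+⋯+mₙ)`: level `k` ↦ `k` ones then zeros -/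
def vanHam (y : GState m) : BState m := fun p =>
  if (p.2 : ℕ) < (y p.1 : ℕ) then 1 else 0

/-- the binarisation `𝔹(f)` of an (asymptotic) evolution function `f` -/
def binf (f : GState m → GState m) : BState m → BState m := fun x p =>
  if (psi x p.1 : ℕ) < (f (psi x) p.1 : ℕ) then 1
  else if (f (psi x) p.1 : ℕ) < (psi x p.1 : ℕ) then 0
  else x p

/-- the binarisation `𝔹(Γ)` of a grid graph over `M`:
edge `x → x'` iff `d(x,x') = 1` and `ψ(x) → ψ(x')` in `Γ` -/
def binGraph (E : GState m → GState m → Prop) : BState m → BState m → Prop :=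
  fun x x' => dist1 (bOne m) x x' = 1 ∧ E (psi x) (psi x')

/-- the action of `𝕊 = ∏ᵢ S_{mᵢ}` on `𝔹^(m₁+⋯+mₙ)` permuting blocks coordinatewise -/
def act (σ : ∀ i : Fin n, Equiv.Perm (Fin (m i))) (x : BState m) : BState m :=
  fun p => x ⟨p.1, σ p.1 p.2⟩

/-- `𝕊`-symmetric Boolean evolution function -/
def SSym (g : BState m → BState m) : Prop :=
  ∀ (σ : ∀ i : Fin n, Equiv.Perm (Fin (m i))) (x : BState m) (p : BIdx m),
    g (act σ x) p = g x ⟨p.1, σ p.1 p.2⟩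

end Binarisation


section Aux

variable {n : ℕ} {m : Fin n → ℕ}

lemma sum_eq_one_exists {α : Type*} [Fintype α] [DecidableEq α] (f : α → ℕ)
    (h : ∑ i, f i = 1) : ∃ i, f i = 1 ∧ ∀ j, j ≠ i → f j = 0 := by
  have hex : ∃ i, f i ≠ 0 := by
    by_contra hc
    push_neg at hc
    simp [hc] at h
  obtain ⟨i, hi⟩ := hex
  have h1 : f i + ∑ j ∈ Finset.univ.erase i, f j = 1 := by
    rw [Finset.add_sum_erase _ f (Finset.mem_univ i)]; exact h
  have hfi : f i = 1 := by omega
  refine ⟨i, hfi, fun j hj => ?_⟩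
  have hz : ∑ j ∈ Finset.univ.erase i, f j = 0 := by omega
  exact Finset.sum_eq_zero_iff.mp hz j (Finset.mem_erase.mpr ⟨hj, Finset.mem_univ j⟩)

lemma card_filter_val_lt {M : ℕ} (k : ℕ) (hk : k ≤ M) :
    (Finset.univ.filter (fun j : Fin M => (j : ℕ) < k)).card = k := by
  have hcb : (Finset.univ.filter (fun j : Fin M => (j : ℕ) < k)).card
      = (Finset.range k).card := by
    apply Finset.card_bij (fun (j : Fin M) _ => (j : ℕ))
    · intro a ha; simp only [Finset.mem_filter] at ha; exact Finset.mem_range.mpr ha.2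
    · intro a _ b _ h; exact Fin.ext h
    · intro b hb
      refine ⟨⟨b, lt_of_lt_of_le (Finset.mem_range.mp hb) hk⟩, ?_, rfl⟩
      simp [Finset.mem_range.mp hb]
  rw [hcb, Finset.card_range]

lemma psi_vanHam (y : GState m) : psi (vanHam y) = y := by
  funext i
  apply Fin.ext
  show (∑ j : Fin (m i), ((vanHam y ⟨i, j⟩ : Fin 2) : ℕ)) = (y i : ℕ)
  have key : ∀ j : Fin (m i), ((vanHam y ⟨i, j⟩ : Fin 2) : ℕ)
      = if (j : ℕ) < ((y i : ℕ)) then 1 else 0 := by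
    intro j
    unfold vanHam
    split <;> simp
  simp only [key]
  rw [Finset.sum_ite, Finset.sum_const, Finset.sum_const_zero, add_zero, smul_eq_mul, mul_one]
  exact card_filter_val_lt _ (Nat.lt_succ_iff.mp (y i).isLt)

lemma psi_update_same (x : BState m) (i : Fin n) (j : Fin (m i)) (v : Fin 2) :
    (psi (Function.update x ⟨i, j⟩ v) i : ℕ) + (x ⟨i, j⟩ : ℕ)
      = (psi x i : ℕ) + (v : ℕ) := by
  classical
  have key : ∀ j' : Fin (m i),
      ((Function.update x ⟨i, j⟩ v) ⟨i, j'⟩ : ℕ)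
        = Function.update (fun j'' : Fin (m i) => ((x ⟨i, j''⟩ : ℕ))) j (v : ℕ) j' := by
    intro j'
    by_cases h : j' = j
    · subst h; simp
    · have h2 : (⟨i, j'⟩ : BIdx m) ≠ ⟨i, j⟩ := by simp [h]
      rw [Function.update_of_ne h2, Function.update_of_ne h]
  show (∑ j' : Fin (m i), ((Function.update x ⟨i, j⟩ v) ⟨i, j'⟩ : ℕ)) + (x ⟨i, j⟩ : ℕ)
      = (∑ j' : Fin (m i), ((x ⟨i, j'⟩ : ℕ))) + (v : ℕ)
  simp only [key]
  rw [Finset.sum_update_of_mem (Finset.mem_univ j),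
    ← Finset.add_sum_erase _ (fun j'' : Fin (m i) => ((x ⟨i, j''⟩ : ℕ))) (Finset.mem_univ j), Finset.erase_eq]
  ring

lemma psi_update_ne (x : BState m) (i : Fin n) (j : Fin (m i)) (v : Fin 2)
    (i' : Fin n) (h : i' ≠ i) :
    psi (Function.update x ⟨i, j⟩ v) i' = psi x i' := by
  apply Fin.ext
  show (∑ j' : Fin (m i'), ((Function.update x ⟨i, j⟩ v) ⟨i', j'⟩ : ℕ))
      = ∑ j' : Fin (m i'), ((x ⟨i', j'⟩ : ℕ))
  apply Finset.sum_congr rfl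
  intro j' _
  have h2 : (⟨i', j'⟩ : BIdx m) ≠ ⟨i, j⟩ := by simp [h]
  rw [Function.update_of_ne h2]

lemma dist1_update (x : BState m) (p : BIdx m) (v : Fin 2) :
    dist1 (bOne m) x (Function.update x p v) = Nat.dist (x p : ℕ) (v : ℕ) := by
  classical
  unfold dist1
  rw [Finset.sum_eq_single p]
  · simp
  · intro q _ hq
    rw [Function.update_of_ne hq, Nat.dist_self]
  · intro hp; exact absurd (Finset.mem_univ p) hp

lemma exists_zero_bit (x : BState m) (i : Fin n) (h : (psi x i : ℕ) < m i) :
    ∃ j : Fin (m i), x ⟨i, j⟩ = 0 := by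
  by_contra hc
  push_neg at hc
  have h1 : ∀ j : Fin (m i), (x ⟨i, j⟩ : ℕ) = 1 := by
    intro j
    have h2 : (x ⟨i, j⟩ : ℕ) < 2 := (x ⟨i, j⟩).isLt
    have h3 : (x ⟨i, j⟩ : ℕ) ≠ 0 := fun h0 => hc j (Fin.ext h0)
    omega
  have hmi : (psi x i : ℕ) = m i := by
    show (∑ j : Fin (m i), ((x ⟨i, j⟩ : ℕ))) = m i
    simp [h1]
  omega

lemma exists_one_bit (x : BState m) (i : Fin n) (h : 0 < (psi x i : ℕ)) :
    ∃ j : Fin (m i), x ⟨i, j⟩ = 1 := by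
  by_contra hc
  push_neg at hc
  have h1 : ∀ j : Fin (m i), (x ⟨i, j⟩ : ℕ) = 0 := by
    intro j
    have h2 : (x ⟨i, j⟩ : ℕ) < 2 := (x ⟨i, j⟩).isLt
    have h3 : (x ⟨i, j⟩ : ℕ) ≠ 1 := fun h0 => hc j (Fin.ext h0)
    omega
  have hmi : (psi x i : ℕ) = 0 := by
    show (∑ j : Fin (m i), ((x ⟨i, j⟩ : ℕ))) = 0
    simp [h1]
  omega

lemma lift_edge (E : GState m → GState m → Prop) (hE : IsGridGraph m E)
    (x : BState m) (y' : GState m) (h : E (psi x) y') :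
    ∃ x', binGraph E x x' ∧ psi x' = y' := by
  have hd : ∑ i, Nat.dist ((psi x) i : ℕ) (y' i : ℕ) = 1 := hE.1 _ _ h
  obtain ⟨i, hi1, hi0⟩ := sum_eq_one_exists _ hd
  have heq : ∀ i', i' ≠ i → (psi x i' : ℕ) = (y' i' : ℕ) :=
    fun i' hi' => Nat.eq_of_dist_eq_zero (hi0 i' hi')
  have hcases : (psi x i : ℕ) + 1 = (y' i : ℕ) ∨ (y' i : ℕ) + 1 = (psi x i : ℕ) := by
    simp [Nat.dist] at hi1; omega
  rcases hcases with hup | hdown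
  · have hlt : (psi x i : ℕ) < m i := by
      have := Nat.lt_succ_iff.mp (y' i).isLt
      omega
    obtain ⟨j, hj⟩ := exists_zero_bit x i hlt
    have hpsi : psi (Function.update x ⟨i, j⟩ 1) = y' := by
      funext i'
      by_cases hi' : i' = i
      · subst hi'
        apply Fin.ext
        have h5 := psi_update_same x i' j 1
        rw [hj] at h5
        simp at h5
        omega
      · rw [psi_update_ne x i j 1 i' hi']
        exact Fin.ext (heq i' hi')
    refine ⟨Function.update x ⟨i, j⟩ 1, ⟨?_, ?_⟩, hpsi⟩
    · rw [dist1_update, hj]; rfl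
    · rw [hpsi]; exact h
  · have hpos : 0 < (psi x i : ℕ) := by omega
    obtain ⟨j, hj⟩ := exists_one_bit x i hpos
    have hpsi : psi (Function.update x ⟨i, j⟩ 0) = y' := by
      funext i'
      by_cases hi' : i' = i
      · subst hi'
        apply Fin.ext
        have h5 := psi_update_same x i' j 0
        rw [hj] at h5
        simp at h5
        omega
      · rw [psi_update_ne x i j 0 i' hi']
        exact Fin.ext (heq i' hi')
    refine ⟨Function.update x ⟨i, j⟩ 0, ⟨?_, ?_⟩, hpsi⟩
    · rw [dist1_update, hj]; rfl
    · rw [hpsi]; exact h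

lemma lift_path (E : GState m → GState m → Prop) (hE : IsGridGraph m E)
    {y z : GState m} (h : Relation.ReflTransGen E y z)
    (x : BState m) (hx : psi x = y) :
    ∃ x', Relation.ReflTransGen (binGraph E) x x' ∧ psi x' = z := by
  induction h with
  | refl => exact ⟨x, Relation.ReflTransGen.refl, hx⟩
  | tail _ e ih =>
    obtain ⟨x₁, hxx₁, hx₁⟩ := ih
    obtain ⟨x₂, he, hx₂⟩ := lift_edge E hE x₁ _ (by rw [hx₁]; exact e)
    exact ⟨x₂, hxx₁.tail he, hx₂⟩

end Aux

/-- strongly connected components of `𝔹(Γ)` map surjectively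
onto those of `Γ` via `ψ`. -/
theorem scc_surjective
    {n : ℕ} {m : Fin n → ℕ} (E : GState m → GState m → Prop)
    (hE : IsGridGraph m E) :
    (∀ x x' : BState m, InSameSCC (bOne m) (binGraph E) x x' →
      InSameSCC m E (psi x) (psi x')) ∧
    (∀ y : GState m, ∃ x : BState m,
      psi '' sccOf (bOne m) (binGraph E) x = sccOf m E y) := by
  classical
  have proj : ∀ x x' : BState m, Relation.ReflTransGen (binGraph E) x x' →
      Relation.ReflTransGen E (psi x) (psi x') := fun x x' h =>
    Relation.ReflTransGen.lift (p := E) psi (fun a b (hab : binGraph E a b) => hab.2) _ _ h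
  constructor
  · rintro x x' ⟨h1, h2⟩
    exact ⟨proj _ _ h1, proj _ _ h2⟩
  · intro y
    set F : Finset (BState m) := Finset.univ.filter (fun a => psi a = y) with hF
    set D : BState m → Finset (BState m) := fun a =>
      Finset.univ.filter (fun b => psi b = y ∧ Relation.ReflTransGen (binGraph E) b a) with hD
    have hFne : F.Nonempty := ⟨vanHam y, by simp [hF, psi_vanHam]⟩
    obtain ⟨x, hxF, hmax⟩ := F.exists_max_image (fun a => (D a).card) hFne
    have hpsix : psi x = y := by simpa [hF] using hxF
    refine ⟨x, ?_⟩
    ext z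
    constructor
    · rintro ⟨x', hx', rfl⟩
      obtain ⟨h1, h2⟩ := hx'
      rw [← hpsix]
      exact ⟨proj _ _ h1, proj _ _ h2⟩
    · rintro ⟨hyz, hzy⟩
      obtain ⟨x₁, hxx₁, hx₁⟩ := lift_path E hE hyz x hpsix
      obtain ⟨x₂, hx₁x₂, hx₂⟩ := lift_path E hE hzy x₁ hx₁
      have hxx₂ : Relation.ReflTransGen (binGraph E) x x₂ := hxx₁.trans hx₁x₂
      have hsub : D x ⊆ D x₂ := by
        intro b hb
        simp only [hD, Finset.mem_filter, Finset.mem_univ, true_and] at hb ⊢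
        exact ⟨hb.1, hb.2.trans hxx₂⟩
      have hx₂mem : x₂ ∈ D x₂ := by
        simp only [hD, Finset.mem_filter, Finset.mem_univ, true_and]
        exact ⟨hx₂, Relation.ReflTransGen.refl⟩
      have hback : Relation.ReflTransGen (binGraph E) x₂ x := by
        by_contra hc
        have hss : D x ⊂ D x₂ := by
          refine ⟨hsub, fun hsub2 => hc ?_⟩
          have hm := hsub2 hx₂mem
          simp only [hD, Finset.mem_filter, Finset.mem_univ, true_and] at hm
          exact hm.2
        have hlt := Finset.card_lt_card hss
        have hle := hmax x₂ (by simp [hF, hx₂])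
        omega
      exact ⟨x₁, ⟨hxx₁, hx₁x₂.trans hback⟩, hx₁⟩


end GRN
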